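/- Let c > 0, let R, C : [0, c] → ℝ be continuous, let g(x) := R(x) − C(c − x) for x ∈ [0, c], and suppose g attains its maximum over [0, c] at a point x* with x* < c. Fix ε₀ > 0 and x(0) ∈ [0, c − ε₀). Then: (i) for every continuous trajectory x̃ : [0,∞) → [0, c] and every T > 0, ∫₀ᵀ g(x̃(t)) dt ≤ T · g(x*); and (ii) for every ε > 0 there exists δ̂ > 0 such that if λ : [0,∞) → ℝ is continuous with λ(t) > δ̂ for all t and x : [0,∞) → ℝ is differentiable with x'(t) = λ(t)(x(t) − x*)(x(t) − c) and the given initial value x(0), then liminf_{T→∞} (1/T) ∫₀ᵀ g(x(t)) dt ≥ g(x*) − ε. -/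

import Mathlib

open Set Filter Topology

/-- Solution of a linear ODE `z' = G z` on `[0, ∞)` equals `z 0 * exp (∫ G)`. -/
lemma ode_exp (z G : ℝ → ℝ) (hGc : ContinuousOn G (Ici 0))
    (hz : ∀ t ≥ (0:ℝ), HasDerivAt z (G t * z t) t) :
    ∀ t ≥ (0:ℝ), z t = z 0 * Real.exp (∫ s in (0:ℝ)..t, G s) := by
  have hzc : ContinuousOn z (Ici 0) := fun t ht => ((hz t ht).continuousAt).continuousWithinAt
  set G' : ℝ → ℝ := fun t => G (max t 0) with hG'def
  have hGcont : Continuous G' :=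
    hGc.comp_continuous (continuous_id.max continuous_const) (fun t => le_max_right t 0)
  have hG'eq : ∀ t, 0 ≤ t → G' t = G t := by
    intro t ht; simp only [hG'def, max_eq_left ht]
  set I : ℝ → ℝ := fun t => ∫ s in (0:ℝ)..t, G' s with hIdef
  have hIderiv : ∀ t, HasDerivAt I (G' t) t := fun t =>
    intervalIntegral.integral_hasDerivAt_right (hGcont.intervalIntegrable _ _)
      (hGcont.aestronglyMeasurable.stronglyMeasurableAtFilter) hGcont.continuousAt
  have hIcont : Continuous I :=
    continuous_iff_continuousAt.2 fun t => (hIderiv t).continuousAt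
  intro b hb
  set ψ : ℝ → ℝ := fun t => z t * Real.exp (-I t) with hψdef
  have key : ∀ u ∈ Icc (0:ℝ) b, ψ u = ψ 0 := by
    apply constant_of_has_deriv_right_zero
    · exact (hzc.mono (fun s hs => hs.1)).mul
        ((hIcont.neg.rexp).continuousOn)
    · intro u hu
      have hu0 : (0:ℝ) ≤ u := hu.1
      have h1 : HasDerivAt z (G u * z u) u := hz u hu0
      have h2 : HasDerivAt (fun t => Real.exp (-I t)) (Real.exp (-I u) * (-G' u)) u :=
        ((hIderiv u).neg).exp
      have h3 : HasDerivAt ψ (G u * z u * Real.exp (-I u) + z u * (Real.exp (-I u) * (-G' u))) u :=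
        h1.mul h2
      have h4 : G u * z u * Real.exp (-I u) + z u * (Real.exp (-I u) * (-G' u)) = 0 := by
        rw [hG'eq u hu0]; ring
      rw [h4] at h3
      exact h3.hasDerivWithinAt
  have hψb : ψ b = ψ 0 := key b ⟨hb, le_rfl⟩
  have hI0 : I 0 = 0 := intervalIntegral.integral_same
  have hψ0 : ψ 0 = z 0 := by simp [hψdef, hI0]
  have hzb : z b = z 0 * Real.exp (I b) := by
    have hzψ := hψb.trans hψ0
    simp only [hψdef] at hzψ
    have hexp : Real.exp (-I b) * Real.exp (I b) = 1 := by
      rw [← Real.exp_add]; simp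
    calc z b = z b * (Real.exp (-I b) * Real.exp (I b)) := by rw [hexp, mul_one]
      _ = (z b * Real.exp (-I b)) * Real.exp (I b) := by ring
      _ = z 0 * Real.exp (I b) := by rw [hzψ]
  rw [hzb]
  congr 2
  apply intervalIntegral.integral_congr
  intro s hs
  rw [uIcc_of_le hb] at hs
  exact hG'eq s hs.1

/-- Precise form of Theorem 3.5 (optimal control with no adjustment costs): with
`g x = R x − C (c − x)` maximized over `[0, c]` at `x* < c`,
(i) the ideal trajectory dominates any admissible trajectory:
`∫₀ᵀ g(x̃(t)) dt ≤ T g(x*)`, and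
(ii) for every `ε > 0` there is `δ̂ > 0` such that under the policy `μ(t)/λ(t) = x*` with
`λ(t) > δ̂`, the time-averaged reward satisfies
`liminf_{T→∞} (1/T) ∫₀ᵀ g(x(t)) dt ≥ g(x*) − ε`. -/
theorem stmt_19 (c : ℝ) (hc : 0 < c) (R C : ℝ → ℝ)
    (hR : ContinuousOn R (Icc 0 c)) (hC : ContinuousOn C (Icc 0 c))
    (g : ℝ → ℝ) (hg : ∀ x : ℝ, g x = R x - C (c - x))
    (xstar : ℝ) (hxstar_mem : xstar ∈ Icc (0 : ℝ) c) (hxstar_lt : xstar < c)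
    (hmax : ∀ x ∈ Icc (0 : ℝ) c, g x ≤ g xstar)
    (ε₀ : ℝ) (hε₀ : 0 < ε₀)
    (x0 : ℝ) (hx0 : x0 ∈ Ico (0 : ℝ) (c - ε₀)) :
    (∀ xt : ℝ → ℝ, Continuous xt → (∀ t ≥ (0 : ℝ), xt t ∈ Icc (0 : ℝ) c) →
      ∀ T > (0 : ℝ), (∫ t in (0 : ℝ)..T, g (xt t)) ≤ T * g xstar) ∧
    (∀ ε > (0 : ℝ), ∃ δhat > (0 : ℝ),
      ∀ (lam : ℝ → ℝ) (x : ℝ → ℝ),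
        Continuous lam → (∀ t : ℝ, δhat < lam t) →
        (∀ t ≥ (0 : ℝ), HasDerivAt x (lam t * (x t - xstar) * (x t - c)) t) →
        x 0 = x0 →
        g xstar - ε ≤ Filter.liminf (fun T => (∫ t in (0 : ℝ)..T, g (x t)) / T) atTop) := by
  have hgc : ContinuousOn g (Icc 0 c) := by
    have h1 : ContinuousOn (fun y => R y - C (c - y)) (Icc 0 c) := by
      refine hR.sub (hC.comp ((continuous_const.sub continuous_id).continuousOn) ?_)
      intro y hy
      exact ⟨by simp; linarith [hy.2], by simp; linarith [hy.1]⟩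
    exact h1.congr (fun y _ => hg y)
  constructor
  · -- part (i)
    intro xt hxt hmem T hT
    have hint : IntervalIntegrable (fun t => g (xt t)) MeasureTheory.volume 0 T := by
      apply ContinuousOn.intervalIntegrable
      rw [uIcc_of_le hT.le]
      exact hgc.comp hxt.continuousOn (fun t ht => hmem t ht.1)
    calc (∫ t in (0:ℝ)..T, g (xt t)) ≤ ∫ _t in (0:ℝ)..T, g xstar :=
          intervalIntegral.integral_mono_on hT.le hint intervalIntegrable_const
            (fun t ht => hmax _ (hmem t ht.1))
      _ = T * g xstar := by simp [mul_comm]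
  · -- part (ii)
    intro ε hε
    obtain ⟨B, hB⟩ := isCompact_Icc.exists_bound_of_continuousOn hgc
    have hB0 : 0 ≤ B := le_trans (norm_nonneg _) (hB xstar hxstar_mem)
    have hcw : ContinuousWithinAt g (Icc 0 c) xstar := hgc xstar hxstar_mem
    rw [Metric.continuousWithinAt_iff] at hcw
    obtain ⟨η, hη, hηp⟩ := hcw (ε/2) (by linarith)
    refine ⟨1, one_pos, ?_⟩
    intro lam x hlamc hlam hx hx0eq
    set m := min ε₀ (c - xstar) with hmdef
    have hm : 0 < m := lt_min hε₀ (by linarith)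
    have hxc : ContinuousOn x (Ici 0) := fun t ht => ((hx t ht).continuousAt).continuousWithinAt
    have hlampos : ∀ t, (0:ℝ) < lam t := fun t => lt_trans one_pos (hlam t)
    set G₁ : ℝ → ℝ := fun t => lam t * (x t - xstar) with hG₁def
    set G₂ : ℝ → ℝ := fun t => lam t * (x t - c) with hG₂def
    have hG₁c : ContinuousOn G₁ (Ici 0) :=
      (hlamc.continuousOn).mul (hxc.sub continuousOn_const)
    have hG₂c : ContinuousOn G₂ (Ici 0) :=
      (hlamc.continuousOn).mul (hxc.sub continuousOn_const)
    have fact1 : ∀ t ≥ (0:ℝ), c - x t = (c - x0) * Real.exp (∫ s in (0:ℝ)..t, G₁ s) := by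
      have h := ode_exp (fun t => c - x t) G₁ hG₁c ?_
      · intro t ht
        have := h t ht
        simpa [hx0eq] using this
      · intro t ht
        have h1 := (hx t ht).const_sub c
        refine h1.congr_deriv ?_
        simp only [hG₁def]; ring
    have fact2 : ∀ t ≥ (0:ℝ), x t - xstar = (x0 - xstar) * Real.exp (∫ s in (0:ℝ)..t, G₂ s) := by
      have h := ode_exp (fun t => x t - xstar) G₂ hG₂c ?_
      · intro t ht
        have := h t ht
        simpa [hx0eq] using this
      · intro t ht
        have h1 := (hx t ht).sub_const xstar
        refine h1.congr_deriv ?_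
        simp only [hG₂def]; ring
    have hsign : (∀ t ≥ (0:ℝ), xstar ≤ x t) ∨ (∀ t ≥ (0:ℝ), x t ≤ xstar) := by
      rcases le_or_gt xstar x0 with h | h
      · left; intro t ht
        have := fact2 t ht
        nlinarith [Real.exp_pos (∫ s in (0:ℝ)..t, G₂ s)]
      · right; intro t ht
        have := fact2 t ht
        nlinarith [Real.exp_pos (∫ s in (0:ℝ)..t, G₂ s)]
    have hub : ∀ t ≥ (0:ℝ), m ≤ c - x t := by
      rcases hsign with hs | hs
      · intro t ht
        have hE : 0 ≤ ∫ s in (0:ℝ)..t, G₁ s := by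
          apply intervalIntegral.integral_nonneg ht
          intro s hsmem
          exact mul_nonneg (hlampos s).le (sub_nonneg.2 (hs s hsmem.1))
        have h1 : (1:ℝ) ≤ Real.exp (∫ s in (0:ℝ)..t, G₁ s) := Real.one_le_exp hE
        have h2 := fact1 t ht
        have h3 : ε₀ ≤ c - x0 := by linarith [hx0.2]
        have h4 : m ≤ ε₀ := min_le_left _ _
        nlinarith
      · intro t ht
        have := hs t ht
        have h4 : m ≤ c - xstar := min_le_right _ _
        linarith
    have hlb : ∀ t ≥ (0:ℝ), 0 ≤ x t := by
      rcases hsign with hs | hs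
      · intro t ht
        linarith [hs t ht, hxstar_mem.1]
      · intro t ht
        have hE : (∫ s in (0:ℝ)..t, G₂ s) ≤ 0 := by
          have h0 : (0:ℝ) ≤ ∫ s in (0:ℝ)..t, -G₂ s := by
            apply intervalIntegral.integral_nonneg ht
            intro s hsmem
            have : G₂ s ≤ 0 := mul_nonpos_of_nonneg_of_nonpos (hlampos s).le
              (by linarith [hs s hsmem.1])
            linarith
          rw [intervalIntegral.integral_neg] at h0
          linarith
        have h1 : Real.exp (∫ s in (0:ℝ)..t, G₂ s) ≤ 1 := Real.exp_le_one_iff.2 hE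
        have h2 := fact2 t ht
        have h3 : x0 - xstar ≤ 0 := by
          have := hs 0 le_rfl
          rw [hx0eq] at this
          linarith
        have h5 : 0 ≤ (xstar - x0) * (1 - Real.exp (∫ s in (0:ℝ)..t, G₂ s)) :=
          mul_nonneg (by linarith) (by linarith)
        nlinarith [hx0.1]
    have hmem : ∀ t ≥ (0:ℝ), x t ∈ Icc (0:ℝ) c := by
      intro t ht
      exact ⟨hlb t ht, by linarith [hub t ht]⟩
    have hdecay : ∀ t ≥ (0:ℝ), |x t - xstar| ≤ c * Real.exp (-(m * t)) := by
      intro t ht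
      have hG₂int : IntervalIntegrable G₂ MeasureTheory.volume 0 t := by
        apply ContinuousOn.intervalIntegrable
        apply hG₂c.mono
        rw [uIcc_of_le ht]
        exact fun s hs => hs.1
      have hE : (∫ s in (0:ℝ)..t, G₂ s) ≤ -(m * t) := by
        have hptw : ∀ s ∈ Icc (0:ℝ) t, G₂ s ≤ -m := by
          intro s hs
          have h1 : 1 ≤ lam s := (hlam s).le
          have h2 : m ≤ c - x s := hub s hs.1
          simp only [hG₂def]
          nlinarith
        calc (∫ s in (0:ℝ)..t, G₂ s) ≤ ∫ _s in (0:ℝ)..t, (-m) :=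
              intervalIntegral.integral_mono_on ht hG₂int intervalIntegrable_const hptw
          _ = -(m * t) := by simp [mul_comm]
      have habs : |x0 - xstar| ≤ c := by
        rw [abs_le]
        constructor
        · linarith [hx0.1, hxstar_mem.2]
        · linarith [hx0.2, hxstar_mem.1, hε₀]
      calc |x t - xstar| = |x0 - xstar| * Real.exp (∫ s in (0:ℝ)..t, G₂ s) := by
            rw [fact2 t ht, abs_mul, abs_of_pos (Real.exp_pos _)]
        _ ≤ c * Real.exp (-(m * t)) :=
            mul_le_mul habs (Real.exp_le_exp.2 hE) (Real.exp_pos _).le hc.le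
    -- choose t₀
    have htend : Tendsto (fun t : ℝ => c * Real.exp (-(m * t))) atTop (𝓝 0) := by
      have h1 : Tendsto (fun t : ℝ => m * t) atTop atTop :=
        Tendsto.const_mul_atTop hm tendsto_id
      have h2 : Tendsto (fun t : ℝ => Real.exp (-(m * t))) atTop (𝓝 0) :=
        Real.tendsto_exp_neg_atTop_nhds_zero.comp h1
      have := h2.const_mul c
      simpa using this
    obtain ⟨t₀', ht₀'⟩ := eventually_atTop.1 (htend.eventually_lt_const hη)
    set t₀ : ℝ := max t₀' 0 with ht₀def
    have ht₀0 : 0 ≤ t₀ := le_max_right _ _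
    have hgood : ∀ t ≥ t₀, g xstar - ε/2 ≤ g (x t) := by
      intro t ht
      have ht0 : (0:ℝ) ≤ t := le_trans ht₀0 ht
      have h1 : |x t - xstar| < η :=
        lt_of_le_of_lt (hdecay t ht0) (ht₀' t (le_trans (le_max_left _ _) ht))
      have h2 := hηp (hmem t ht0) (by rwa [Real.dist_eq])
      rw [Real.dist_eq, abs_lt] at h2
      linarith [h2.1]
    have hgxc : ContinuousOn (fun t => g (x t)) (Ici 0) :=
      hgc.comp hxc (fun t ht => hmem t ht)
    have hint : ∀ a b : ℝ, 0 ≤ a → a ≤ b →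
        IntervalIntegrable (fun t => g (x t)) MeasureTheory.volume a b := by
      intro a b ha hab
      apply ContinuousOn.intervalIntegrable
      apply hgxc.mono
      rw [uIcc_of_le hab]
      exact fun s hs => le_trans ha hs.1
    set D : ℝ := B * t₀ + t₀ * |g xstar - ε/2| with hDdef
    clear_value D
    have hD0 : 0 ≤ D := by
      rw [hDdef]
      exact add_nonneg (mul_nonneg hB0 ht₀0) (mul_nonneg ht₀0 (abs_nonneg _))
    have hev : ∀ᶠ T in atTop, g xstar - ε ≤ (∫ t in (0:ℝ)..T, g (x t)) / T := by
      filter_upwards [eventually_ge_atTop (max (t₀ + 1) (2 * D / ε))] with T hT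
      have hTt₀ : t₀ ≤ T := by
        have := le_trans (le_max_left (t₀+1) (2*D/ε)) hT; linarith
      have hT0 : (0:ℝ) < T := by
        have := le_trans (le_max_left (t₀+1) (2*D/ε)) hT; linarith
      have hTD : 2 * D ≤ T * ε := by
        have h1 : 2 * D / ε ≤ T := le_trans (le_max_right _ _) hT
        calc 2 * D = (2 * D / ε) * ε := by field_simp
          _ ≤ T * ε := mul_le_mul_of_nonneg_right h1 hε.le
      have hsplit : (∫ t in (0:ℝ)..T, g (x t)) =
          (∫ t in (0:ℝ)..t₀, g (x t)) + ∫ t in t₀..T, g (x t) :=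
        (intervalIntegral.integral_add_adjacent_intervals (hint 0 t₀ le_rfl ht₀0)
          (hint t₀ T ht₀0 hTt₀)).symm
      have hI1 : -(B * t₀) ≤ ∫ t in (0:ℝ)..t₀, g (x t) := by
        have h1 : (∫ _t in (0:ℝ)..t₀, (-B)) ≤ ∫ t in (0:ℝ)..t₀, g (x t) :=
          intervalIntegral.integral_mono_on ht₀0 intervalIntegrable_const
            (hint 0 t₀ le_rfl ht₀0)
            (fun t htm => neg_le_of_abs_le (by
              simpa [Real.norm_eq_abs] using hB (x t) (hmem t htm.1)))
        calc -(B * t₀) = ∫ _t in (0:ℝ)..t₀, (-B) := by simp [mul_comm]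
          _ ≤ _ := h1
      have hI2 : (T - t₀) * (g xstar - ε/2) ≤ ∫ t in t₀..T, g (x t) := by
        have h1 : (∫ _t in t₀..T, (g xstar - ε/2)) ≤ ∫ t in t₀..T, g (x t) :=
          intervalIntegral.integral_mono_on hTt₀ intervalIntegrable_const
            (hint t₀ T ht₀0 hTt₀) (fun t htm => hgood t htm.1)
        calc (T - t₀) * (g xstar - ε/2) = ∫ _t in t₀..T, (g xstar - ε/2) := by
              rw [intervalIntegral.integral_const, smul_eq_mul]
          _ ≤ _ := h1
      have habs2 : t₀ * (g xstar - ε/2) ≤ t₀ * |g xstar - ε/2| :=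
        mul_le_mul_of_nonneg_left (le_abs_self _) ht₀0
      have htot : T * (g xstar - ε/2) - D ≤ ∫ t in (0:ℝ)..T, g (x t) := by
        rw [hsplit, hDdef]
        nlinarith
      show g xstar - ε ≤ (∫ t in (0:ℝ)..T, g (x t)) / T
      rw [le_div_iff₀ hT0]
      have h8 : (g xstar - ε) * T ≤ T * (g xstar - ε/2) - D := by nlinarith
      exact h8.trans htot
    have hbdd : IsBoundedUnder (· ≤ ·) atTop
        (fun T => (∫ t in (0:ℝ)..T, g (x t)) / T) := by
      apply isBoundedUnder_of_eventually_le (a := B)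
      filter_upwards [eventually_ge_atTop (1:ℝ)] with T hT
      have hT0 : (0:ℝ) < T := by linarith
      have h1 : (∫ t in (0:ℝ)..T, g (x t)) ≤ ∫ _t in (0:ℝ)..T, B :=
        intervalIntegral.integral_mono_on hT0.le (hint 0 T le_rfl hT0.le)
          intervalIntegrable_const
          (fun t htm => le_of_abs_le (by
            simpa [Real.norm_eq_abs] using hB (x t) (hmem t htm.1)))
      have h2 : (∫ _t in (0:ℝ)..T, B) = T * B := by simp [mul_comm]
      show (∫ t in (0:ℝ)..T, g (x t)) / T ≤ B
      rw [div_le_iff₀ hT0]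
      rw [h2] at h1
      linarith
    exact le_liminf_of_le hbdd.isCoboundedUnder_ge hev
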